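/- Let G₁ and G₂ be groups, A an abelian group regarded as a trivial module, and n ≥ 1 a natural number. For i = 1, 2, let res_i : H^n(G₁ × G₂; A) → H^n(G_i; A) be the map induced by the canonical inclusion G_i → G₁ × G₂, and let infl_i : H^n(G_i; A) → H^n(G₁ × G₂; A) be the map induced by the canonical projection G₁ × G₂ → G_i. Then res_i ∘ infl_i = id for i = 1, 2, res_i ∘ infl_j = 0 for i ≠ j, each infl_i is injective, and H^n(G₁ × G₂; A) is the internal direct sum of the three subgroups range(infl₁), range(infl₂), and ker(res₁) ∩ ker(res₂). -/

import Mathlib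

open CategoryTheory groupCohomology

noncomputable section

namespace SPT

variable {G G' : Type} [Group G] [Group G']

theorem comp_contractNth (f : G' →* G) {n : ℕ} (j : Fin (n + 1)) (g : Fin (n + 1) → G') :
    (⇑f) ∘ Fin.contractNth j (· * ·) g = Fin.contractNth j (· * ·) ((⇑f) ∘ g) := by
  ext k
  rcases lt_trichotomy (k : ℕ) (j : ℕ) with h | h | h
  · simp only [Function.comp_apply, Fin.contractNth_apply_of_lt _ _ _ _ h]
  · simp only [Function.comp_apply, Fin.contractNth_apply_of_eq _ _ _ _ h, map_mul]
  · simp only [Function.comp_apply, Fin.contractNth_apply_of_gt _ _ _ _ h]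

/-- The map on inhomogeneous cochains (with trivial coefficients `A`) induced by
precomposition with a group homomorphism `f : G' →* G`. -/
def cochainsMap (f : G' →* G) (A : Type) [AddCommGroup A] :
    inhomogeneousCochains (Rep.trivial ℤ G A) ⟶ inhomogeneousCochains (Rep.trivial ℤ G' A) where
  f n := ModuleCat.ofHom
    { toFun := fun (c : (Fin n → G) → A) (x : Fin n → G') => c ((⇑f) ∘ x)
      map_add' := fun _ _ => rfl
      map_smul' := fun _ _ => rfl }
  comm' i j hij := by
    obtain rfl : i + 1 = j := hij
    ext c x
    simp only [CochainComplex.of_d, ModuleCat.hom_comp, LinearMap.comp_apply,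
      ModuleCat.hom_ofHom, LinearMap.coe_mk, AddHom.coe_mk]
    show (inhomogeneousCochains.d (Rep.trivial ℤ G' A) i).hom (fun y => c ((⇑f) ∘ y)) x
        = (inhomogeneousCochains.d (Rep.trivial ℤ G A) i).hom c ((⇑f) ∘ x)
    simp only [inhomogeneousCochains.d_hom_apply, Rep.trivial_ρ_apply]
    congr 1
    exact Finset.sum_congr rfl fun j _ => by rw [comp_contractNth]

/-- The homomorphism `f^* : Hⁿ(G; A) →+ Hⁿ(G'; A)` on group cohomology (with trivial
coefficients `A`) induced by a group homomorphism `f : G' →* G`; it is induced by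
precomposition with `f` on inhomogeneous cochains. -/
def cohomologyMap (f : G' →* G) (A : Type) [AddCommGroup A] (n : ℕ) :
    groupCohomology (Rep.trivial ℤ G A) n →+ groupCohomology (Rep.trivial ℤ G' A) n :=
  AddMonoidHom.mk' (HomologicalComplex.homologyMap (cochainsMap f A) n) (map_add _)

end SPT

open SPT

section Product

variable (G₁ G₂ : Type) [Group G₁] [Group G₂] (A : Type) [AddCommGroup A] (n : ℕ)

/-- The restriction `res₁ : H^n(G₁ × G₂; A) → H^n(G₁; A)`, induced by the canonical
inclusion `G₁ → G₁ × G₂`. -/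
noncomputable def res₁ := cohomologyMap (MonoidHom.inl G₁ G₂) A n

/-- The restriction `res₂ : H^n(G₁ × G₂; A) → H^n(G₂; A)`, induced by the canonical
inclusion `G₂ → G₁ × G₂`. -/
noncomputable def res₂ := cohomologyMap (MonoidHom.inr G₁ G₂) A n

/-- The inflation `infl₁ : H^n(G₁; A) → H^n(G₁ × G₂; A)`, induced by the canonical
projection `G₁ × G₂ → G₁`. -/
noncomputable def infl₁ := cohomologyMap (MonoidHom.fst G₁ G₂) A n

/-- The inflation `infl₂ : H^n(G₂; A) → H^n(G₁ × G₂; A)`, induced by the canonical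
projection `G₁ × G₂ → G₂`. -/
noncomputable def infl₂ := cohomologyMap (MonoidHom.snd G₁ G₂) A n

end Product

section Aux
variable {G G' G'' : Type} [Group G] [Group G'] [Group G'']

lemma cochainsMap_comp (f : G' →* G) (g : G'' →* G') (A : Type) [AddCommGroup A] :
    cochainsMap (f.comp g) A = cochainsMap f A ≫ cochainsMap g A := by
  ext : 2; rfl

lemma cohomologyMap_comp (f : G' →* G) (g : G'' →* G') (A : Type) [AddCommGroup A] (n : ℕ)
    (x : groupCohomology (Rep.trivial ℤ G A) n) :
    cohomologyMap (f.comp g) A n x = cohomologyMap g A n (cohomologyMap f A n x) := by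
  show HomologicalComplex.homologyMap (cochainsMap (f.comp g) A) n x = _
  rw [_root_.cochainsMap_comp, HomologicalComplex.homologyMap_comp]
  rfl

lemma cohomologyMap_id (A : Type) [AddCommGroup A] (n : ℕ)
    (x : groupCohomology (Rep.trivial ℤ G A) n) :
    cohomologyMap (MonoidHom.id G) A n x = x := by
  have h : cochainsMap (MonoidHom.id G) A = 𝟙 _ := by ext : 2; rfl
  show HomologicalComplex.homologyMap (cochainsMap (MonoidHom.id G) A) n x = x
  rw [h, HomologicalComplex.homologyMap_id]
  rfl

end Aux
section PUnitAux

lemma sum_neg_one_pow_range (m : ℕ) :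
    ∑ j ∈ Finset.range m, (-1 : ℤ) ^ j = if Even m then 0 else 1 := by
  induction m with
  | zero => simp
  | succ k ih =>
    rw [Finset.sum_range_succ, ih]
    rcases Nat.even_or_odd k with h | h
    · simp [h, Nat.even_add_one, Nat.not_even_iff_odd, Even.neg_one_pow h,
        Nat.odd_iff.1 (Even.add_one h)]
    · simp [Nat.not_even_iff_odd.2 h, Nat.even_add_one, Nat.not_odd_iff_even,
        Odd.neg_one_pow h, Nat.even_add_one.2 (Nat.not_even_iff_odd.2 h)]

lemma d_punit_apply (A : Type) [AddCommGroup A] (m : ℕ) (c : (Fin m → PUnit) → A)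
    (x : Fin (m + 1) → PUnit) :
    (inhomogeneousCochains.d (Rep.trivial ℤ PUnit A) m).hom c x
      = (if Even m then (0 : ℤ) else 1) • c default := by
  have hc : ∀ y : Fin m → PUnit, c y = c default := fun y => congrArg c (Subsingleton.elim _ _)
  rw [inhomogeneousCochains.d_hom_apply]
  simp only [Rep.trivial_ρ_apply, hc]
  rw [← Finset.sum_smul]
  have hs : (∑ j : Fin (m + 1), (-1 : ℤ) ^ ((j : ℕ) + 1))
      = -(if Even (m + 1) then 0 else 1) := by
    rw [Fin.sum_univ_eq_sum_range (fun j => (-1 : ℤ) ^ (j + 1)), ← sum_neg_one_pow_range]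
    rw [← Finset.sum_neg_distrib]
    exact Finset.sum_congr rfl fun j _ => by ring
  rw [hs]
  rcases Nat.even_or_odd m with h | h
  · simp [h, Nat.not_even_iff_odd.2 (Even.add_one h), ← add_smul]
  · simp [Nat.not_even_iff_odd.2 h, Nat.even_add_one.2 (Nat.not_even_iff_odd.2 h), ← add_smul]

end PUnitAux
section PUnitVanish

lemma punit_exactAt (A : Type) [AddCommGroup A] (m : ℕ) :
    (inhomogeneousCochains (Rep.trivial ℤ PUnit A)).ExactAt (m + 1) := by
  rw [(inhomogeneousCochains (Rep.trivial ℤ PUnit A)).exactAt_iff' m (m + 1) (m + 2)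
    (by simp) (by simp)]
  rw [ShortComplex.moduleCat_exact_iff]
  intro (c : (Fin (m + 1) → PUnit) → A) hc
  have hc' : (inhomogeneousCochains.d (Rep.trivial ℤ PUnit A) (m + 1)).hom c = 0 := by
    have e : m + 2 = m + 1 + 1 := rfl
    rw [e] at hc
    simp [CochainComplex.of_d] at hc
    exact hc
  rcases Nat.even_or_odd m with h | h
  · -- m even: d_{m+1} has coefficient 1, so c = 0
    have h2 : (0 : (Fin (m + 2) → PUnit.{1}) → A) default
        = (if Even (m + 1) then (0 : ℤ) else 1) • c default := by
      rw [← hc']; exact d_punit_apply A (m + 1) c default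
    have h0 : c default = 0 := by
      simpa [Nat.not_even_iff_odd.2 (Even.add_one h)] using h2.symm
    refine ⟨0, ?_⟩
    have hcz : c = 0 := by
      funext y
      rw [congrArg c (Subsingleton.elim y default), h0]; rfl
    rw [hcz]
    exact map_zero _
  · -- m odd: b := const (c default)
    refine ⟨(fun _ => c default : (Fin m → PUnit) → A), ?_⟩
    show (inhomogeneousCochains (Rep.trivial ℤ PUnit A)).d m (m + 1)
      (fun _ => c default : (Fin m → PUnit) → A) = c
    simp only [CochainComplex.of_d]
    funext x
    exact (d_punit_apply A m (fun _ => c default) x).trans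
      (by simp [Nat.not_even_iff_odd.2 h, congrArg c (Subsingleton.elim x default)])

lemma punit_cohomology_eq_zero (A : Type) [AddCommGroup A] {n : ℕ} (hn : 1 ≤ n)
    (x : groupCohomology (Rep.trivial ℤ PUnit A) n) : x = 0 := by
  obtain ⟨m, rfl⟩ := Nat.exists_eq_add_of_le' hn
  have hz : CategoryTheory.Limits.IsZero (groupCohomology (Rep.trivial ℤ PUnit A) (m + 1)) :=
    (HomologicalComplex.exactAt_iff_isZero_homology _ _).1 (punit_exactAt A m)
  have hid : 𝟙 (groupCohomology (Rep.trivial ℤ PUnit A) (m + 1)) = 0 := hz.eq_of_src _ _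
  calc x = (𝟙 (groupCohomology (Rep.trivial ℤ PUnit A) (m + 1))) x := rfl
    _ = (0 : groupCohomology (Rep.trivial ℤ PUnit A) (m + 1) ⟶ _) x := by rw [hid]
    _ = 0 := rfl

variable {G G' : Type} [Group G] [Group G']

lemma cohomologyMap_one (A : Type) [AddCommGroup A] {n : ℕ} (hn : 1 ≤ n)
    (x : groupCohomology (Rep.trivial ℤ G A) n) :
    cohomologyMap (1 : G' →* G) A n x = 0 := by
  have h : (1 : G' →* G) = (1 : PUnit →* G).comp (1 : G' →* PUnit) := by ext; simp
  rw [h, cohomologyMap_comp,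
    punit_cohomology_eq_zero A hn (cohomologyMap (1 : PUnit →* G) A n x), map_zero]

end PUnitVanish
set_option maxHeartbeats 4000000
set_option synthInstance.maxHeartbeats 1000000

/-- For groups `G₁, G₂`, an abelian group `A` with the trivial action, and `n ≥ 1`:
`resᵢ ∘ inflᵢ = id`, `resᵢ ∘ inflⱼ = 0` for `i ≠ j`, each `inflᵢ` is injective, and
`H^n(G₁ × G₂; A)` is the internal direct sum of `range infl₁`, `range infl₂`, and
`ker res₁ ∩ ker res₂`. -/
theorem groupCohomology_prod_internal_direct_sum (G₁ G₂ : Type) [Group G₁] [Group G₂]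
    (A : Type) [AddCommGroup A] (n : ℕ) (hn : 1 ≤ n) :
    (∀ y, res₁ G₁ G₂ A n (infl₁ G₁ G₂ A n y) = y) ∧
    (∀ y, res₂ G₁ G₂ A n (infl₂ G₁ G₂ A n y) = y) ∧
    (∀ y, res₁ G₁ G₂ A n (infl₂ G₁ G₂ A n y) = 0) ∧
    (∀ y, res₂ G₁ G₂ A n (infl₁ G₁ G₂ A n y) = 0) ∧
    Function.Injective (infl₁ G₁ G₂ A n) ∧
    Function.Injective (infl₂ G₁ G₂ A n) ∧
    DirectSum.IsInternal
      ![(infl₁ G₁ G₂ A n).range, (infl₂ G₁ G₂ A n).range,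
        (res₁ G₁ G₂ A n).ker ⊓ (res₂ G₁ G₂ A n).ker] := by
  have h11 : ∀ y, res₁ G₁ G₂ A n (infl₁ G₁ G₂ A n y) = y := by
    intro y
    have h := cohomologyMap_comp (MonoidHom.fst G₁ G₂) (MonoidHom.inl G₁ G₂) A n y
    rw [show (MonoidHom.fst G₁ G₂).comp (MonoidHom.inl G₁ G₂) = MonoidHom.id G₁ by ext x; simp,
      cohomologyMap_id] at h
    exact h.symm
  have h22 : ∀ y, res₂ G₁ G₂ A n (infl₂ G₁ G₂ A n y) = y := by
    intro y
    have h := cohomologyMap_comp (MonoidHom.snd G₁ G₂) (MonoidHom.inr G₁ G₂) A n y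
    rw [show (MonoidHom.snd G₁ G₂).comp (MonoidHom.inr G₁ G₂) = MonoidHom.id G₂ by ext x; simp,
      cohomologyMap_id] at h
    exact h.symm
  have h12 : ∀ y, res₁ G₁ G₂ A n (infl₂ G₁ G₂ A n y) = 0 := by
    intro y
    have h := cohomologyMap_comp (MonoidHom.snd G₁ G₂) (MonoidHom.inl G₁ G₂) A n y
    rw [show (MonoidHom.snd G₁ G₂).comp (MonoidHom.inl G₁ G₂) = (1 : G₁ →* G₂) by ext x; simp,
      cohomologyMap_one A hn y] at h
    exact h.symm
  have h21 : ∀ y, res₂ G₁ G₂ A n (infl₁ G₁ G₂ A n y) = 0 := by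
    intro y
    have h := cohomologyMap_comp (MonoidHom.fst G₁ G₂) (MonoidHom.inr G₁ G₂) A n y
    rw [show (MonoidHom.fst G₁ G₂).comp (MonoidHom.inr G₁ G₂) = (1 : G₂ →* G₁) by ext x; simp,
      cohomologyMap_one A hn y] at h
    exact h.symm
  refine ⟨h11, h22, h12, h21,
    Function.LeftInverse.injective h11, Function.LeftInverse.injective h22, ?_, ?_⟩
  · -- injective
    rw [injective_iff_map_eq_zero]
    intro z hz
    have hsum : (z 0 : groupCohomology (Rep.trivial ℤ (G₁ × G₂) A) n)
        + (z 1 : groupCohomology (Rep.trivial ℤ (G₁ × G₂) A) n)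
        + (z 2 : groupCohomology (Rep.trivial ℤ (G₁ × G₂) A) n) = 0 := by
      rw [← DirectSum.sum_univ_of z, map_sum] at hz
      simpa [Fin.sum_univ_three] using hz
    have m0 : (z 0 : groupCohomology (Rep.trivial ℤ (G₁ × G₂) A) n)
        ∈ (infl₁ G₁ G₂ A n).range := by have := (z 0).2; simpa using this
    have m1 : (z 1 : groupCohomology (Rep.trivial ℤ (G₁ × G₂) A) n)
        ∈ (infl₂ G₁ G₂ A n).range := by have := (z 1).2; simpa using this
    have m2 : (z 2 : groupCohomology (Rep.trivial ℤ (G₁ × G₂) A) n)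
        ∈ (res₁ G₁ G₂ A n).ker ⊓ (res₂ G₁ G₂ A n).ker := by have := (z 2).2; simpa using this
    obtain ⟨a, ha⟩ := m0
    obtain ⟨b, hb⟩ := m1
    rw [AddSubgroup.mem_inf, AddMonoidHom.mem_ker, AddMonoidHom.mem_ker] at m2
    have ea : a = 0 := by
      have e1 := congrArg (res₁ G₁ G₂ A n) hsum
      rw [map_add, map_add, map_zero, ← ha, ← hb, h11, h12, m2.1, add_zero, add_zero] at e1
      exact e1
    have eb : b = 0 := by
      have e2 := congrArg (res₂ G₁ G₂ A n) hsum
      rw [map_add, map_add, map_zero, ← ha, ← hb, h22, h21, m2.2, add_zero, zero_add] at e2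
      exact e2
    have hz0 : (z 0 : groupCohomology (Rep.trivial ℤ (G₁ × G₂) A) n) = 0 := by
      rw [← ha, ea, map_zero]
    have hz1 : (z 1 : groupCohomology (Rep.trivial ℤ (G₁ × G₂) A) n) = 0 := by
      rw [← hb, eb, map_zero]
    have hz2 : (z 2 : groupCohomology (Rep.trivial ℤ (G₁ × G₂) A) n) = 0 := by
      rw [hz0, hz1, zero_add, zero_add] at hsum
      exact hsum
    refine DFinsupp.ext fun i => ?_
    fin_cases i
    · simpa using hz0
    · simpa using hz1
    · simpa using hz2
  · -- surjective
    set S : Fin 3 → AddSubgroup (groupCohomology (Rep.trivial ℤ (G₁ × G₂) A) n) :=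
      ![(infl₁ G₁ G₂ A n).range, (infl₂ G₁ G₂ A n).range,
        (res₁ G₁ G₂ A n).ker ⊓ (res₂ G₁ G₂ A n).ker] with hS
    intro x
    have m0 : infl₁ G₁ G₂ A n (res₁ G₁ G₂ A n x) ∈ S 0 := by
      rw [hS]; simpa using ⟨res₁ G₁ G₂ A n x, rfl⟩
    have m1 : infl₂ G₁ G₂ A n (res₂ G₁ G₂ A n x) ∈ S 1 := by
      rw [hS]; simpa using ⟨res₂ G₁ G₂ A n x, rfl⟩
    have m2 : x - infl₁ G₁ G₂ A n (res₁ G₁ G₂ A n x) - infl₂ G₁ G₂ A n (res₂ G₁ G₂ A n x)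
        ∈ S 2 := by
      rw [hS]
      simp only [Matrix.cons_val_two, Matrix.tail_cons, Matrix.head_cons, AddSubgroup.mem_inf,
        AddMonoidHom.mem_ker]
      constructor
      · rw [map_sub, map_sub, h11, h12, sub_zero, sub_self]
      · rw [map_sub, map_sub, h22, h21, sub_zero, sub_self]
    refine ⟨DirectSum.of (fun i => S i) 0 ⟨_, m0⟩ + DirectSum.of (fun i => S i) 1 ⟨_, m1⟩
      + DirectSum.of (fun i => S i) 2 ⟨_, m2⟩, ?_⟩
    rw [map_add, map_add, DirectSum.coeAddMonoidHom_of, DirectSum.coeAddMonoidHom_of,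
      DirectSum.coeAddMonoidHom_of]
    show infl₁ G₁ G₂ A n (res₁ G₁ G₂ A n x) + infl₂ G₁ G₂ A n (res₂ G₁ G₂ A n x)
      + (x - infl₁ G₁ G₂ A n (res₁ G₁ G₂ A n x) - infl₂ G₁ G₂ A n (res₂ G₁ G₂ A n x)) = x
    abel
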